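/- Let G be an acyclic transitive digraph on a finite vertex set V and let S be a subgraph of G. Then S is a locally maximal 2-dimensional subgraph of G (a 2-dimensional subgraph not strictly contained in any 2-dimensional subgraph of G) if and only if ucl(S) is a locally maximal permutation subgraph of ucl(G) (an undirected subgraph of ucl(G) that is a permutation graph and is not strictly contained in any undirected subgraph of ucl(G) that is a permutation graph). -/

import Mathlib

/-- Undirected closure of a digraph: `E ∪ E⁻¹`. -/
def ucl {V : Type*} (E : V → V → Prop) : V → V → Prop := fun a b => E a b ∨ E b a

/-- Complement of a digraph: all pairs of distinct vertices not in `ucl E`. -/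
def cmpl {V : Type*} (E : V → V → Prop) : V → V → Prop := fun a b => a ≠ b ∧ ¬ ucl E a b

/-- A digraph is oriented iff `E ∩ E⁻¹ = ∅`. -/
def Oriented {V : Type*} (E : V → V → Prop) : Prop := ∀ a b, E a b → ¬ E b a

/-- `O` is an orientation of `E`: a maximal oriented subset of `E`. -/
def IsOrientation {V : Type*} (O E : V → V → Prop) : Prop :=
  (∀ a b, O a b → E a b) ∧ Oriented O ∧
    ∀ O' : V → V → Prop, (∀ a b, O' a b → E a b) → Oriented O' →
      (∀ a b, O a b → O' a b) → ∀ a b, O' a b → O a b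

/-- Transitivity of a digraph: `(a,b) ∈ E`, `(b,c) ∈ E` and `a ≠ c` imply `(a,c) ∈ E`. -/
def TransD {V : Type*} (E : V → V → Prop) : Prop :=
  ∀ a b c, E a b → E b c → a ≠ c → E a c

/-- Transitive closure of a digraph. -/
def tcl {V : Type*} (E : V → V → Prop) : V → V → Prop := Relation.TransGen E

/-- A digraph is acyclic iff its transitive closure is irreflexive. -/
def Acyclic {V : Type*} (E : V → V → Prop) : Prop := Irreflexive (tcl E)

/-- A transitive orientation of `E` is an orientation of `E` that is transitive. -/
def IsTransOrientation {V : Type*} (O E : V → V → Prop) : Prop :=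
  IsOrientation O E ∧ TransD O

/-- `E` is transitively orientable iff it has a transitive orientation. -/
def TransOrientable {V : Type*} (E : V → V → Prop) : Prop := ∃ O, IsTransOrientation O E

/-- `L` is a strict linear order on the vertex set. -/
def IsStrictLinear {V : Type*} (L : V → V → Prop) : Prop :=
  Irreflexive L ∧ Transitive L ∧ ∀ a b : V, a ≠ b → L a b ∨ L b a

/-- `E` is 2-dimensional: the intersection of two strict linear orders. -/
def TwoDim {V : Type*} (E : V → V → Prop) : Prop :=
  ∃ L₁ L₂ : V → V → Prop, IsStrictLinear L₁ ∧ IsStrictLinear L₂ ∧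
    ∀ a b, E a b ↔ L₁ a b ∧ L₂ a b

/-- Direct forcing `Γ` between edges of an undirected graph `E`:
`(a,b) Γ (c,d)` iff both are edges of `E` and either `a = c` with `b, d` non-adjacent,
or `b = d` with `a, c` non-adjacent. -/
def Forces {V : Type*} (E : V → V → Prop) (e f : V × V) : Prop :=
  E e.1 e.2 ∧ E f.1 f.2 ∧
    ((e.1 = f.1 ∧ e.2 ≠ f.2 ∧ ¬ E e.2 f.2) ∨ (e.2 = f.2 ∧ e.1 ≠ f.1 ∧ ¬ E e.1 f.1))

/-- `S` is a 2-dimensional subgraph of `G`: a subgraph that is a 2-dimensional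
acyclic transitive digraph. -/
def TwoDimSubgraph {V : Type*} (G S : V → V → Prop) : Prop :=
  (∀ a b, S a b → G a b) ∧ Irreflexive S ∧ TransD S ∧ Acyclic S ∧ TwoDim S

/-- A permutation graph: an undirected graph such that both it and its complement
are transitively orientable. -/
def PermGraph {V : Type*} (E : V → V → Prop) : Prop :=
  Irreflexive E ∧ (∀ a b, E a b → E b a) ∧ TransOrientable E ∧ TransOrientable (cmpl E)

/-- `S` is a permutation subgraph of `G`: an undirected subgraph of `G` that is a
permutation graph. -/
def PermSubgraph {V : Type*} (G S : V → V → Prop) : Prop :=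
  (∀ a b, S a b → G a b) ∧ PermGraph S

section Aux
variable {V : Type*}

lemma oriented_of_acyclic {G : V → V → Prop} (h : Acyclic G) : Oriented G := by
  intro a b hab hba
  exact h a (Relation.TransGen.head hab (Relation.TransGen.single hba))

lemma tcl_le {G : V → V → Prop} (htrans : TransD G) (hacyc : Acyclic G) :
    ∀ a b, tcl G a b → G a b := by
  intro a b h
  induction h with
  | single h => exact h
  | @tail b c hab hbc ih =>
    by_cases hac : a = c
    · subst hac
      exact ((hacyc a) (Relation.TransGen.head ih (Relation.TransGen.single hbc))).elim
    · exact htrans a b c ih hbc hac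

lemma orientation_total {O E : V → V → Prop} (h : IsOrientation O E) {a b : V}
    (hne : a ≠ b) (hab : E a b) (hba : E b a) : O a b ∨ O b a := by
  by_contra hc
  push_neg at hc
  obtain ⟨h1, h2⟩ := hc
  obtain ⟨hOE, hor, hmax⟩ := h
  have hsub : ∀ x y, (O x y ∨ (x = a ∧ y = b)) → E x y := by
    rintro x y (hxy | ⟨rfl, rfl⟩)
    exacts [hOE x y hxy, hab]
  have hor' : Oriented (fun x y => O x y ∨ (x = a ∧ y = b)) := by
    rintro x y (hxy | ⟨rfl, rfl⟩) (hyx | ⟨he1, he2⟩)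
    · exact hor x y hxy hyx
    · subst he1; subst he2; exact h2 hxy
    · exact h2 hyx
    · exact hne he2
  have := hmax (fun x y => O x y ∨ (x = a ∧ y = b)) hsub hor'
    (fun x y hxy => Or.inl hxy) a b (Or.inr ⟨rfl, rfl⟩)
  exact h1 this

lemma union_linear {P Q : V → V → Prop}
    (hPirr : Irreflexive P) (hPor : Oriented P) (hPtr : TransD P)
    (hQirr : Irreflexive Q) (hQor : Oriented Q) (hQtr : TransD Q)
    (hdisj : ∀ a b, Q a b → ¬ P a b ∧ ¬ P b a)
    (hcov : ∀ a b, a ≠ b → P a b ∨ P b a ∨ Q a b ∨ Q b a) :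
    IsStrictLinear (fun a b => P a b ∨ Q a b) := by
  refine ⟨?_, ?_, ?_⟩
  · rintro a (h | h)
    exacts [hPirr a h, hQirr a h]
  · rintro a b c (hab | hab) (hbc | hbc)
    · by_cases hac : a = c
      · subst hac; exact ((hPor a b hab) hbc).elim
      · exact Or.inl (hPtr a b c hab hbc hac)
    · by_cases hac : a = c
      · subst hac; exact ((hdisj b a hbc).2 hab).elim
      · have hbc' : b ≠ c := fun h => hQirr c (h ▸ hbc)
        have hab' : a ≠ b := fun h => hPirr b (h ▸ hab)
        rcases hcov a c hac with h | h | h | h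
        · exact Or.inl h
        · exact ((hdisj b c hbc).2 (hPtr c a b h hab hbc'.symm)).elim
        · exact Or.inr h
        · exact ((hdisj b a (hQtr b c a hbc h hab'.symm)).2 hab).elim
    · by_cases hac : a = c
      · subst hac; exact ((hdisj a b hab).2 hbc).elim
      · have hab' : a ≠ b := fun h => hQirr b (h ▸ hab)
        have hbc' : b ≠ c := fun h => hPirr c (h ▸ hbc)
        rcases hcov a c hac with h | h | h | h
        · exact Or.inl h
        · exact ((hdisj a b hab).2 (hPtr b c a hbc h hab'.symm)).elim
        · exact Or.inr h
        · exact ((hdisj c b (hQtr c a b h hab hbc'.symm)).2 hbc).elim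
    · by_cases hac : a = c
      · subst hac; exact ((hQor a b hab) hbc).elim
      · exact Or.inr (hQtr a b c hab hbc hac)
  · intro a b hne
    rcases hcov a b hne with h | h | h | h
    exacts [Or.inl (Or.inl h), Or.inr (Or.inl h), Or.inl (Or.inr h), Or.inr (Or.inr h)]


lemma box {L₁ L₂ D : V → V → Prop}
    (h₁ : IsStrictLinear L₁) (h₂ : IsStrictLinear L₂)
    (hDF : ∀ x y, D x y → (L₁ x y ∧ L₂ x y) ∨ (L₁ y x ∧ L₂ y x))
    (hcomp : ∀ x y, L₁ x y → L₂ x y → tcl D x y ∨ tcl D y x)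
    (b u w : V) (hP : tcl D u w) (hu1 : L₁ u b) (hu2 : L₂ b u)
    (hw1 : L₁ b w) (hw2 : L₂ w b) :
    (tcl D b u ∨ tcl D u b) ∨ (tcl D b w ∨ tcl D w b) := by
  obtain ⟨irr1, tr1, tot1⟩ := h₁
  obtain ⟨irr2, tr2, tot2⟩ := h₂
  revert hu1 hu2
  induction hP using Relation.TransGen.head_induction_on with
  | single h =>
    intro hu1 hu2
    rcases hDF _ _ h with ⟨g1, g2⟩ | ⟨g1, g2⟩
    · exact (irr2 _ (tr2 g2 (tr2 hw2 hu2))).elim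
    · exact (irr1 _ (tr1 (tr1 hu1 hw1) g1)).elim
  | @head u' v huv hvw IH =>
    intro hu1 hu2
    by_cases hvb : v = b
    · subst hvb
      exact Or.inl (Or.inr (Relation.TransGen.single huv))
    by_cases hl1 : L₁ v b
    · by_cases hl2 : L₂ b v
      · rcases IH hl1 hl2 with (hbv | hvb') | hw
        · exact Or.inr (Or.inl (hbv.trans hvw))
        · exact Or.inl (Or.inr (Relation.TransGen.head huv hvb'))
        · exact Or.inr hw
      · have hl2' : L₂ v b := (tot2 v b hvb).resolve_right hl2
        rcases hcomp v b hl1 hl2' with hvb' | hbv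
        · exact Or.inl (Or.inr (Relation.TransGen.head huv hvb'))
        · exact Or.inr (Or.inl (hbv.trans hvw))
    · have hl1' : L₁ b v := (tot1 v b hvb).resolve_left hl1
      by_cases hl2 : L₂ b v
      · rcases hcomp b v hl1' hl2 with hbv | hvb'
        · exact Or.inr (Or.inl (hbv.trans hvw))
        · exact Or.inl (Or.inr (Relation.TransGen.head huv hvb'))
      · have hl2' : L₂ v b := (tot2 v b hvb).resolve_right hl2
        rcases hDF _ _ huv with ⟨g1, g2⟩ | ⟨g1, g2⟩
        · exact (hl2 (tr2 hu2 g2)).elim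
        · exact (irr1 _ (tr1 (tr1 hu1 hl1') g1)).elim
end Aux
section Aux2
variable {V : Type*}

lemma perm_of_twodim {G S : V → V → Prop} (h : TwoDimSubgraph G S) :
    PermSubgraph (ucl G) (ucl S) := by
  obtain ⟨hSG, hSirr, hStr, hSac, L₁, L₂, hL₁, hL₂, hiff⟩ := h
  obtain ⟨irr1, tr1, tot1⟩ := hL₁
  obtain ⟨irr2, tr2, tot2⟩ := hL₂
  have hor : Oriented S := oriented_of_acyclic hSac
  constructor
  · rintro a b (h | h)
    exacts [Or.inl (hSG _ _ h), Or.inr (hSG _ _ h)]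
  refine ⟨?_, ?_, ?_, ?_⟩
  · rintro a (h | h) <;> exact hSirr a h
  · rintro a b (h | h)
    exacts [Or.inr h, Or.inl h]
  · -- TransOrientable (ucl S) via S
    refine ⟨S, ⟨⟨fun a b h => Or.inl h, hor, ?_⟩, hStr⟩⟩
    · intro O' hO'sub hO'or hext a b hab
      rcases (hO'sub a b hab : S a b ∨ S b a) with h | h
      · exact h
      · exact ((hO'or a b hab) (hext b a h)).elim
  · -- TransOrientable (cmpl (ucl S)) via O a b := L₁ a b ∧ L₂ b a
    have hOdom : ∀ a b : V, (L₁ a b ∧ L₂ b a) → cmpl (ucl S) a b := by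
      rintro a b ⟨g1, g2⟩
      have hne : a ≠ b := fun h => irr1 a (h ▸ g1)
      refine ⟨hne, ?_⟩
      intro hadj
      have hadj' : (S a b ∨ S b a) ∨ (S b a ∨ S a b) := hadj
      have hS : S a b ∨ S b a := by
        rcases hadj' with h | h
        · exact h
        · exact h.symm
      rcases hS with h | h
      · exact irr2 a (tr2 ((hiff a b).1 h).2 g2)
      · exact irr1 a (tr1 g1 ((hiff b a).1 h).1)
    have hOcov : ∀ a b : V, cmpl (ucl S) a b → (L₁ a b ∧ L₂ b a) ∨ (L₁ b a ∧ L₂ a b) := by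
      rintro a b ⟨hne, hnadj⟩
      have hnS : ¬ S a b := fun h => hnadj (Or.inl (Or.inl h))
      have hnS' : ¬ S b a := fun h => hnadj (Or.inl (Or.inr h))
      rcases tot1 a b hne with g1 | g1
      · refine Or.inl ⟨g1, ?_⟩
        rcases tot2 a b hne with g2 | g2
        · exact ((hnS ((hiff a b).2 ⟨g1, g2⟩)).elim)
        · exact g2
      · refine Or.inr ⟨g1, ?_⟩
        rcases tot2 b a hne.symm with g2 | g2
        · exact ((hnS' ((hiff b a).2 ⟨g1, g2⟩)).elim)
        · exact g2
    refine ⟨fun a b => L₁ a b ∧ L₂ b a, ⟨⟨hOdom, ?_, ?_⟩, ?_⟩⟩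
    · rintro a b ⟨g1, _⟩ ⟨g1', _⟩
      exact irr1 a (tr1 g1 g1')
    · intro O' hsub' hor' hext a b hab
      rcases hOcov a b (hsub' a b hab) with h | h
      · exact h
      · exact ((hor' a b hab) (hext b a ⟨h.1, h.2⟩)).elim
    · rintro a b c ⟨g1, g2⟩ ⟨g1', g2'⟩ _
      exact ⟨tr1 g1 g1', tr2 g2' g2⟩

end Aux2

section Aux3
variable {V : Type*}

lemma tcl_tcl {R : V → V → Prop} : ∀ a b : V, tcl (tcl R) a b → tcl R a b := by
  intro a b h
  induction h with
  | single h => exact h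
  | tail _ hbc ih => exact ih.trans hbc

lemma lemmaB {G T : V → V → Prop} (hirr : Irreflexive G) (hacyc : Acyclic G)
    (htrans : TransD G) (hperm : PermSubgraph (ucl G) T) :
    ∃ S'' : V → V → Prop, TwoDimSubgraph G S'' ∧ ∀ a b, T a b → ucl S'' a b := by
  obtain ⟨hTG, hTirr, hTsymm, ⟨F, hFO, hFtr⟩, ⟨F', hF'O, hF'tr⟩⟩ := hperm
  have hFsub : ∀ a b, F a b → T a b := hFO.1
  have hFor : Oriented F := hFO.2.1
  have hF'sub : ∀ a b, F' a b → cmpl T a b := hF'O.1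
  have hF'or : Oriented F' := hF'O.2.1
  have hFirr : Irreflexive F := fun a h => hTirr a (hFsub a a h)
  have hF'irr : Irreflexive F' := fun a h => (hF'sub a a h).1 rfl
  have hFcov : ∀ a b, T a b → F a b ∨ F b a := fun a b h =>
    orientation_total hFO (fun e => hTirr b (by rw [e] at h; exact h)) h (hTsymm a b h)
  have hnT : ∀ a b : V, a ≠ b → ¬ T a b → cmpl T a b := by
    intro a b hne h
    refine ⟨hne, fun hu => ?_⟩
    rcases (hu : T a b ∨ T b a) with h' | h'
    exacts [h h', h (hTsymm b a h')]
  have hF'cov : ∀ a b : V, a ≠ b → ¬ T a b → F' a b ∨ F' b a := by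
    intro a b hne h
    have h' : ¬ T b a := fun hh => h (hTsymm b a hh)
    exact orientation_total hF'O hne (hnT a b hne h) (hnT b a hne.symm h')
  have hdisjF : ∀ a b, F' a b → ¬ F a b ∧ ¬ F b a := by
    intro a b h
    have hx := (hF'sub a b h).2
    exact ⟨fun hf => hx (Or.inl (hFsub a b hf)), fun hf => hx (Or.inr (hFsub b a hf))⟩
  have hL₁ : IsStrictLinear (fun a b => F a b ∨ F' a b) :=
    union_linear hFirr hFor hFtr hF'irr hF'or hF'tr hdisjF (by
      intro a b hne
      by_cases hT : T a b
      · rcases hFcov a b hT with h | h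
        exacts [Or.inl h, Or.inr (Or.inl h)]
      · rcases hF'cov a b hne hT with h | h
        exacts [Or.inr (Or.inr (Or.inl h)), Or.inr (Or.inr (Or.inr h))])
  have hL₂ : IsStrictLinear (fun a b => F a b ∨ F' b a) :=
    union_linear hFirr hFor hFtr (fun a h => hF'irr a h) (fun a b h h' => hF'or b a h h')
      (fun a b c hab hbc hne => hF'tr c b a hbc hab hne.symm)
      (fun a b h => ⟨(hdisjF b a h).2, (hdisjF b a h).1⟩)
      (by
        intro a b hne
        by_cases hT : T a b
        · rcases hFcov a b hT with h | h
          exacts [Or.inl h, Or.inr (Or.inl h)]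
        · rcases hF'cov a b hne hT with h | h
          exacts [Or.inr (Or.inr (Or.inr h)), Or.inr (Or.inr (Or.inl h))])
  obtain ⟨lirr1, ltr1, ltot1⟩ := hL₁
  obtain ⟨lirr2, ltr2, ltot2⟩ := hL₂
  set D : V → V → Prop := fun a b => G a b ∧ T a b with hDdef
  have hPG : ∀ a b, tcl D a b → G a b := by
    intro a b h
    exact tcl_le htrans hacyc a b (Relation.TransGen.mono (r := D) (p := G) (fun x y hxy => hxy.1) a b h)
  have hDT : ∀ x y, T x y → D x y ∨ D y x := by
    intro x y h
    rcases (hTG x y h : G x y ∨ G y x) with hg | hg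
    exacts [Or.inl ⟨hg, h⟩, Or.inr ⟨hg, hTsymm x y h⟩]
  have hLF : ∀ x y : V, (F x y ∨ F' x y) → (F x y ∨ F' y x) → F x y := by
    rintro x y (h | h) (h' | h')
    · exact h
    · exact h
    · exact h'
    · exact (hF'or x y h h').elim
  have hcompP : ∀ x y : V, (F x y ∨ F' x y) → (F x y ∨ F' y x) → tcl D x y ∨ tcl D y x := by
    intro x y h h'
    rcases hDT x y (hFsub x y (hLF x y h h')) with hd | hd
    exacts [Or.inl (Relation.TransGen.single hd), Or.inr (Relation.TransGen.single hd)]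
  have hDF : ∀ x y, D x y →
      (((F x y ∨ F' x y) ∧ (F x y ∨ F' y x)) ∨ ((F y x ∨ F' y x) ∧ (F y x ∨ F' x y))) := by
    intro x y hd
    rcases hFcov x y hd.2 with h | h
    exacts [Or.inl ⟨Or.inl h, Or.inl h⟩, Or.inr ⟨Or.inl h, Or.inl h⟩]
  have hPirr : Irreflexive (tcl D) := fun a h => hirr a (hPG a a h)
  have hPtr : TransD (tcl D) := fun a b c hab hbc _ => hab.trans hbc
  have hPor : Oriented (tcl D) := fun a b hab hba => hPirr a (hab.trans hba)
  set Q : V → V → Prop := fun a b => (F a b ∨ F' a b) ∧ ¬ tcl D a b ∧ ¬ tcl D b a with hQdef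
  have hQl2 : ∀ a b : V, (F a b ∨ F' a b) → ¬ tcl D a b → ¬ tcl D b a → (F b a ∨ F' a b) := by
    intro a b h1 hn1 hn2
    have hne : a ≠ b := fun e => lirr1 a (by rw [e] at h1 ⊢; exact h1)
    rcases ltot2 a b hne with h2 | h2
    · rcases hcompP a b h1 h2 with h | h
      exacts [(hn1 h).elim, (hn2 h).elim]
    · exact h2
  have hQtr : TransD Q := by
    rintro a b c ⟨h1, hna, hna'⟩ ⟨h2, hnb, hnb'⟩ hne
    have l2ba := hQl2 a b h1 hna hna'
    have l2cb := hQl2 b c h2 hnb hnb'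
    refine ⟨ltr1 h1 h2, ?_, ?_⟩
    · intro hac
      rcases box ⟨lirr1, ltr1, ltot1⟩ ⟨lirr2, ltr2, ltot2⟩ hDF hcompP b a c hac h1 l2ba h2 l2cb
        with (h | h) | (h | h)
      exacts [(hna' h).elim, (hna h).elim, (hnb h).elim, (hnb' h).elim]
    · intro hca
      rcases box ⟨lirr2, ltr2, ltot2⟩ ⟨lirr1, ltr1, ltot1⟩
        (fun x y hd => by rcases hDF x y hd with ⟨p, q⟩ | ⟨p, q⟩; exacts [Or.inl ⟨q, p⟩, Or.inr ⟨q, p⟩])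
        (fun x y h h' => hcompP x y h' h) b c a hca l2cb h2 l2ba h1
        with (h | h) | (h | h)
      exacts [(hnb h).elim, (hnb' h).elim, (hna' h).elim, (hna h).elim]
  have hQirr : Irreflexive Q := fun a h => lirr1 a h.1
  have hQor : Oriented Q := fun a b h h' => lirr1 a (ltr1 h.1 h'.1)
  have hdisjQ : ∀ a b, Q a b → ¬ tcl D a b ∧ ¬ tcl D b a := fun a b h => h.2
  have hcovQ : ∀ a b : V, a ≠ b → tcl D a b ∨ tcl D b a ∨ Q a b ∨ Q b a := by
    intro a b hne
    by_cases h1 : tcl D a b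
    · exact Or.inl h1
    by_cases h2 : tcl D b a
    · exact Or.inr (Or.inl h2)
    rcases ltot1 a b hne with h | h
    · exact Or.inr (Or.inr (Or.inl ⟨h, h1, h2⟩))
    · exact Or.inr (Or.inr (Or.inr ⟨h, h2, h1⟩))
  have hM₁ := union_linear hPirr hPor hPtr hQirr hQor hQtr hdisjQ hcovQ
  have hM₂ := union_linear (P := tcl D) (Q := fun a b => Q b a) hPirr hPor hPtr
      (fun a h => hQirr a h) (fun a b h h' => hQor b a h h')
      (fun a b c hab hbc hne => hQtr c b a hbc hab hne.symm)
      (fun a b h => ⟨(hdisjQ b a h).2, (hdisjQ b a h).1⟩)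
      (by
        intro a b hne
        rcases hcovQ a b hne with h | h | h | h
        exacts [Or.inl h, Or.inr (Or.inl h), Or.inr (Or.inr (Or.inr h)), Or.inr (Or.inr (Or.inl h))])
  refine ⟨tcl D, ⟨hPG, hPirr, hPtr, ?_, ?_⟩, ?_⟩
  · exact fun a h => hPirr a (tcl_tcl a a h)
  · refine ⟨_, _, hM₁, hM₂, ?_⟩
    intro a b
    constructor
    · intro h
      exact ⟨Or.inl h, Or.inl h⟩
    · rintro ⟨h1 | h1, h2 | h2⟩
      · exact h1
      · exact h1
      · exact h2
      · exact (lirr1 a (ltr1 h1.1 h2.1)).elim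
  · intro a b h
    rcases hDT a b h with hd | hd
    exacts [Or.inl (Relation.TransGen.single hd), Or.inr (Relation.TransGen.single hd)]

end Aux3


theorem maximal_two_dim_iff_maximal_permutation
    {V : Type*} [Fintype V] (G S : V → V → Prop)
    (hirr : Irreflexive G) (hacyc : Acyclic G) (htrans : TransD G)
    (hsub : ∀ a b, S a b → G a b) :
    (TwoDimSubgraph G S ∧
      ∀ S' : V → V → Prop, TwoDimSubgraph G S' →
        (∀ a b, S a b → S' a b) → ∀ a b, S' a b → S a b) ↔
    (PermSubgraph (ucl G) (ucl S) ∧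
      ∀ T : V → V → Prop, PermSubgraph (ucl G) T →
        (∀ a b, ucl S a b → T a b) → ∀ a b, T a b → ucl S a b) := by
  have hGor : Oriented G := oriented_of_acyclic hacyc
  constructor
  · rintro ⟨h2d, hmax⟩
    refine ⟨perm_of_twodim h2d, ?_⟩
    intro T hT hST a b hTab
    obtain ⟨S'', hS''2d, hTS''⟩ := lemmaB hirr hacyc htrans hT
    have hSsub'' : ∀ x y, S x y → S'' x y := by
      intro x y hxy
      rcases (hTS'' x y (hST x y (Or.inl hxy)) : S'' x y ∨ S'' y x) with h | h
      · exact h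
      · exact ((hGor x y (hsub x y hxy)) (hS''2d.1 y x h)).elim
    have hle := hmax S'' hS''2d hSsub''
    rcases (hTS'' a b hTab : S'' a b ∨ S'' b a) with h | h
    · exact Or.inl (hle a b h)
    · exact Or.inr (hle b a h)
  · rintro ⟨hperm, hmaxP⟩
    obtain ⟨S'', hS''2d, hTS''⟩ := lemmaB hirr hacyc htrans hperm
    have hle := hmaxP (ucl S'') (perm_of_twodim hS''2d) hTS''
    have hSeq : S = S'' := by
      funext a b
      apply propext
      constructor
      · intro h
        rcases (hTS'' a b (Or.inl h) : S'' a b ∨ S'' b a) with h' | h'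
        · exact h'
        · exact ((hGor a b (hsub a b h)) (hS''2d.1 b a h')).elim
      · intro h
        rcases (hle a b (Or.inl h) : S a b ∨ S b a) with h' | h'
        · exact h'
        · exact ((hGor a b (hS''2d.1 a b h)) (hsub b a h')).elim
    constructor
    · rw [hSeq]; exact hS''2d
    · intro S' hS' hSS' a b hab
      have hle' := hmaxP (ucl S') (perm_of_twodim hS')
        (fun x y h => by
          rcases (h : S x y ∨ S y x) with h' | h'
          exacts [Or.inl (hSS' x y h'), Or.inr (hSS' y x h')])
      rcases (hle' a b (Or.inl hab) : S a b ∨ S b a) with h | h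
      · exact h
      · exact ((hGor a b (hS'.1 a b hab)) (hsub b a h)).elim
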